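/- arXiv:1901.11501 — 3 statements merged into one kernel-verified Lean document; each statement's English description precedes it below -/
import Mathlib

section
/- Let R be a discrete valuation ring with maximal ideal 𝔪 and finite residue field of cardinality q. For j ≥ 1 let V^j = {g ∈ GL₂(R) : g₁₁ − 1 ∈ 𝔪^{⌈j/2⌉}, g₂₂ − 1 ∈ 𝔪^{⌈j/2⌉}, g₁₂ ∈ 𝔪^{⌊j/2⌋}, g₂₁ ∈ 𝔪^{⌊j/2⌋+1}} (equivalently, V^j = 1 + (rad 𝒥)^j where 𝒥 is the Iwahori order). Then for every integer i ≥ 1, V^i is a subgroup of V¹ of index q^{2(i−1)}. -/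
open IsLocalRing Matrix

/-- The set `Vʲ = 1 + (rad 𝒥)ʲ` in `GL₂(R)`, where `𝒥` is the Iwahori order:
matrices `g` with `g₁₁ - 1, g₂₂ - 1 ∈ 𝔪^⌈j/2⌉`, `g₁₂ ∈ 𝔪^⌊j/2⌋` and `g₂₁ ∈ 𝔪^(⌊j/2⌋+1)`. -/
def iwahoriFiltration (R : Type*) [CommRing R] [IsLocalRing R] (j : ℕ) :
    Set (GL (Fin 2) R) :=
  {g : GL (Fin 2) R |
    (g : Matrix (Fin 2) (Fin 2) R) 0 0 - 1 ∈ maximalIdeal R ^ ((j + 1) / 2) ∧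
    (g : Matrix (Fin 2) (Fin 2) R) 1 1 - 1 ∈ maximalIdeal R ^ ((j + 1) / 2) ∧
    (g : Matrix (Fin 2) (Fin 2) R) 0 1 ∈ maximalIdeal R ^ (j / 2) ∧
    (g : Matrix (Fin 2) (Fin 2) R) 1 0 ∈ maximalIdeal R ^ (j / 2 + 1)}

set_option linter.unusedSectionVars false

section Aux

variable (R : Type*) [CommRing R] [IsLocalRing R]

lemma iwa_mul_entry (g h : GL (Fin 2) R) (r s : Fin 2) :
    ((g * h : GL (Fin 2) R) : Matrix (Fin 2) (Fin 2) R) r s =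
      (g : Matrix (Fin 2) (Fin 2) R) r 0 * (h : Matrix (Fin 2) (Fin 2) R) 0 s +
      (g : Matrix (Fin 2) (Fin 2) R) r 1 * (h : Matrix (Fin 2) (Fin 2) R) 1 s := by
  show ((g : Matrix (Fin 2) (Fin 2) R) * (h : Matrix (Fin 2) (Fin 2) R)) r s = _
  rw [Matrix.mul_apply, Fin.sum_univ_two]

lemma iwa_inv_entry (g : GL (Fin 2) R) (r s : Fin 2) :
    ((g⁻¹ : GL (Fin 2) R) : Matrix (Fin 2) (Fin 2) R) r s =
      Ring.inverse (g : Matrix (Fin 2) (Fin 2) R).det *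
        (!![(g : Matrix (Fin 2) (Fin 2) R) 1 1, -(g : Matrix (Fin 2) (Fin 2) R) 0 1;
            -(g : Matrix (Fin 2) (Fin 2) R) 1 0, (g : Matrix (Fin 2) (Fin 2) R) 0 0] r s) := by
  rw [← Matrix.adjugate_fin_two, ← smul_eq_mul, ← Matrix.smul_apply, ← Matrix.inv_def,
    ← Matrix.coe_units_inv]

def iwahoriSubgroup (j : ℕ) : Subgroup (GL (Fin 2) R) where
  carrier := iwahoriFiltration R j
  one_mem' := by
    refine ⟨?_, ?_, ?_, ?_⟩ <;>
      simp [Units.val_one, Matrix.one_apply]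
  mul_mem' := by
    rintro g h ⟨hg1, hg2, hg3, hg4⟩ ⟨hh1, hh2, hh3, hh4⟩
    set A := (g : Matrix (Fin 2) (Fin 2) R) with hA
    set B := (h : Matrix (Fin 2) (Fin 2) R) with hB
    have hba : (j + 1) / 2 ≤ j / 2 + 1 := by omega
    have hg4' : A 1 0 ∈ maximalIdeal R ^ ((j + 1) / 2) := Ideal.pow_le_pow_right hba hg4
    have hh4' : B 1 0 ∈ maximalIdeal R ^ ((j + 1) / 2) := Ideal.pow_le_pow_right hba hh4
    refine ⟨?_, ?_, ?_, ?_⟩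
    · have e : ((g * h : GL (Fin 2) R) : Matrix (Fin 2) (Fin 2) R) 0 0 - 1 =
          (A 0 0 - 1) * (B 0 0 - 1) + (A 0 0 - 1) + (B 0 0 - 1) + A 0 1 * B 1 0 := by
        have := iwa_mul_entry R g h 0 0; rw [← hA, ← hB] at this; linear_combination this
      rw [e]
      exact add_mem (add_mem (add_mem (Ideal.mul_mem_right _ _ hg1) hg1) hh1)
        (Ideal.mul_mem_left _ _ hh4')
    · have e : ((g * h : GL (Fin 2) R) : Matrix (Fin 2) (Fin 2) R) 1 1 - 1 =
          (A 1 1 - 1) * (B 1 1 - 1) + (A 1 1 - 1) + (B 1 1 - 1) + A 1 0 * B 0 1 := by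
        have := iwa_mul_entry R g h 1 1; rw [← hA, ← hB] at this; linear_combination this
      rw [e]
      exact add_mem (add_mem (add_mem (Ideal.mul_mem_right _ _ hg2) hg2) hh2)
        (Ideal.mul_mem_right _ _ hg4')
    · rw [iwa_mul_entry, ← hA, ← hB]
      exact add_mem (Ideal.mul_mem_left _ _ hh3) (Ideal.mul_mem_right _ _ hg3)
    · rw [iwa_mul_entry, ← hA, ← hB]
      exact add_mem (Ideal.mul_mem_right _ _ hg4) (Ideal.mul_mem_left _ _ hh4)
  inv_mem' := by
    rintro g ⟨hg1, hg2, hg3, hg4⟩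
    set A := (g : Matrix (Fin 2) (Fin 2) R) with hA
    set u := Ring.inverse A.det with hu
    have hdet : A.det = A 0 0 * A 1 1 - A 0 1 * A 1 0 := Matrix.det_fin_two A
    have hunit : IsUnit A.det := by
      rw [← Matrix.isUnit_iff_isUnit_det]
      exact g.isUnit
    have hud : u * A.det = 1 := Ring.inverse_mul_cancel _ hunit
    have hba : (j + 1) / 2 ≤ j / 2 + 1 := by omega
    have hg4' : A 1 0 ∈ maximalIdeal R ^ ((j + 1) / 2) := Ideal.pow_le_pow_right hba hg4
    refine ⟨?_, ?_, ?_, ?_⟩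
    · have e : ((g⁻¹ : GL (Fin 2) R) : Matrix (Fin 2) (Fin 2) R) 0 0 - 1 =
          -(u * ((A 0 0 - 1) * A 1 1)) + u * (A 0 1 * A 1 0) := by
        have := iwa_inv_entry R g 0 0; rw [← hA, ← hu] at this
        simp only [Matrix.cons_val', Matrix.cons_val_zero, Matrix.empty_val',
          Matrix.cons_val_fin_one, Matrix.cons_val_one, Matrix.head_cons,
          Matrix.head_fin_const, Matrix.of_apply] at this
        linear_combination this + hud - u * hdet
      rw [e]
      exact add_mem (neg_mem (Ideal.mul_mem_left _ _ (Ideal.mul_mem_right _ _ hg1)))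
        (Ideal.mul_mem_left _ _ (Ideal.mul_mem_left _ _ hg4'))
    · have e : ((g⁻¹ : GL (Fin 2) R) : Matrix (Fin 2) (Fin 2) R) 1 1 - 1 =
          -(u * ((A 1 1 - 1) * A 0 0)) + u * (A 0 1 * A 1 0) := by
        have := iwa_inv_entry R g 1 1; rw [← hA, ← hu] at this
        simp only [Matrix.cons_val', Matrix.cons_val_zero, Matrix.empty_val',
          Matrix.cons_val_fin_one, Matrix.cons_val_one, Matrix.head_cons,
          Matrix.head_fin_const, Matrix.of_apply] at this
        linear_combination this + hud - u * hdet
      rw [e]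
      exact add_mem (neg_mem (Ideal.mul_mem_left _ _ (Ideal.mul_mem_right _ _ hg2)))
        (Ideal.mul_mem_left _ _ (Ideal.mul_mem_left _ _ hg4'))
    · have e := iwa_inv_entry R g 0 1
      rw [← hA, ← hu] at e
      simp only [Matrix.cons_val', Matrix.cons_val_zero, Matrix.empty_val',
        Matrix.cons_val_fin_one, Matrix.cons_val_one, Matrix.head_cons,
        Matrix.head_fin_const, Matrix.of_apply] at e
      rw [e, mul_neg]
      exact neg_mem (Ideal.mul_mem_left _ _ hg3)
    · have e := iwa_inv_entry R g 1 0
      rw [← hA, ← hu] at e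
      simp only [Matrix.cons_val', Matrix.cons_val_zero, Matrix.empty_val',
        Matrix.cons_val_fin_one, Matrix.cons_val_one, Matrix.head_cons,
        Matrix.head_fin_const, Matrix.of_apply] at e
      rw [e, mul_neg]
      exact neg_mem (Ideal.mul_mem_left _ _ hg4)


abbrev QQ (t : ℕ) : Type _ :=
  (maximalIdeal R ^ t : Ideal R) ⧸
    (Submodule.comap (maximalIdeal R ^ t : Ideal R).subtype (maximalIdeal R ^ (t + 1)))

def mkQQ (t : ℕ) (x : R) (hx : x ∈ maximalIdeal R ^ t) : QQ R t :=
  Submodule.Quotient.mk ⟨x, hx⟩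

lemma mkQQ_eq_zero (t : ℕ) (x : R) (hx : x ∈ maximalIdeal R ^ t) :
    mkQQ R t x hx = 0 ↔ x ∈ maximalIdeal R ^ (t + 1) := by
  rw [mkQQ, Submodule.Quotient.mk_eq_zero, Submodule.mem_comap]
  rfl

lemma mkQQ_add_eq (t : ℕ) (x y z : R) (hx : x ∈ maximalIdeal R ^ t)
    (hy : y ∈ maximalIdeal R ^ t) (hz : z ∈ maximalIdeal R ^ t)
    (h : z - (x + y) ∈ maximalIdeal R ^ (t + 1)) :
    mkQQ R t z hz = mkQQ R t x hx + mkQQ R t y hy := by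
  rw [mkQQ, mkQQ, mkQQ, ← Submodule.Quotient.mk_add, Submodule.Quotient.eq,
    Submodule.mem_comap]
  exact h

lemma card_QQ [IsDomain R] [IsDiscreteValuationRing R] (t : ℕ) :
    Nat.card (QQ R t) = Nat.card (ResidueField R) := by
  obtain ⟨ϖ, hϖ⟩ := IsDiscreteValuationRing.exists_irreducible R
  have hϖm : ϖ ∈ maximalIdeal R := by
    rw [hϖ.maximalIdeal_eq]; exact Ideal.mem_span_singleton_self ϖ
  have hmem : ∀ x : R, ϖ ^ t * x ∈ maximalIdeal R ^ t := fun x =>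
    Ideal.mul_mem_right _ _ (Ideal.pow_mem_pow hϖm t)
  let ℓ : R →ₗ[R] (maximalIdeal R ^ t : Ideal R) :=
    LinearMap.codRestrict _ (LinearMap.mulLeft R (ϖ ^ t)) hmem
  let N := Submodule.comap (maximalIdeal R ^ t : Ideal R).subtype (maximalIdeal R ^ (t + 1))
  let f : R →ₗ[R] QQ R t := N.mkQ.comp ℓ
  have hsurj : Function.Surjective f := by
    intro y
    obtain ⟨⟨x, hx⟩, rfl⟩ := Submodule.Quotient.mk_surjective _ y
    have hx' : ϖ ^ t ∣ x := by
      rwa [hϖ.maximalIdeal_eq, Ideal.span_singleton_pow, Ideal.mem_span_singleton] at hx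
    obtain ⟨r, hr⟩ := hx'
    refine ⟨r, ?_⟩
    show Submodule.Quotient.mk (ℓ r) = _
    congr 1
    exact Subtype.ext hr.symm
  have hker : LinearMap.ker f = (maximalIdeal R : Submodule R R) := by
    ext x
    have : f x = 0 ↔ ϖ ^ t * x ∈ maximalIdeal R ^ (t + 1) := by
      show N.mkQ (ℓ x) = 0 ↔ _
      rw [Submodule.mkQ_apply, Submodule.Quotient.mk_eq_zero, Submodule.mem_comap]
      rfl
    rw [LinearMap.mem_ker, this, hϖ.maximalIdeal_eq, Ideal.span_singleton_pow,
      Ideal.mem_span_singleton, pow_succ, mul_dvd_mul_iff_left (pow_ne_zero t hϖ.ne_zero),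
      ← Ideal.mem_span_singleton, ← hϖ.maximalIdeal_eq]
  have e := f.quotKerEquivOfSurjective hsurj
  rw [hker] at e
  exact (Nat.card_congr e.toEquiv).symm

lemma iwa_mem {j : ℕ} {g : GL (Fin 2) R} (hg : g ∈ iwahoriSubgroup R j) :
    (g : Matrix (Fin 2) (Fin 2) R) 0 0 - 1 ∈ maximalIdeal R ^ ((j + 1) / 2) ∧
    (g : Matrix (Fin 2) (Fin 2) R) 1 1 - 1 ∈ maximalIdeal R ^ ((j + 1) / 2) ∧
    (g : Matrix (Fin 2) (Fin 2) R) 0 1 ∈ maximalIdeal R ^ (j / 2) ∧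
    (g : Matrix (Fin 2) (Fin 2) R) 1 0 ∈ maximalIdeal R ^ (j / 2 + 1) := hg

lemma pow_le_max {s : ℕ} (hs : 1 ≤ s) : maximalIdeal R ^ s ≤ maximalIdeal R := by
  simpa using Ideal.pow_le_pow_right (I := maximalIdeal R) hs

lemma relindex_step [IsDomain R] [IsDiscreteValuationRing R] (j : ℕ) (hj : 1 ≤ j) :
    (iwahoriSubgroup R (j + 1)).relIndex (iwahoriSubgroup R j) =
      Nat.card (ResidueField R) ^ 2 := by
  suffices h : ∃ (s t : ℕ) (φ : ↥(iwahoriSubgroup R j) →* Multiplicative (QQ R s × QQ R t)),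
      φ.ker = (iwahoriSubgroup R (j + 1)).subgroupOf (iwahoriSubgroup R j) ∧
      Function.Surjective φ by
    obtain ⟨s, t, φ, hker, hsurj⟩ := h
    rw [Subgroup.relIndex, ← hker, Subgroup.index_ker, MonoidHom.range_eq_top.mpr hsurj,
      Subgroup.card_top, Nat.card_congr (Multiplicative.toAdd (α := QQ R s × QQ R t)),
      Nat.card_prod, card_QQ, card_QQ, sq]
  rcases Nat.even_or_odd j with ⟨m, hm⟩ | ⟨m, hm⟩
  · -- even case : j = m + m
    subst hm
    have hm1 : 1 ≤ m := by omega
    have e1 : (m + m + 1) / 2 = m := by omega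
    have e2 : (m + m) / 2 = m := by omega
    have mem00 : ∀ g : ↥(iwahoriSubgroup R (m + m)),
        ((g : GL (Fin 2) R) : Matrix (Fin 2) (Fin 2) R) 0 0 - 1 ∈ maximalIdeal R ^ m :=
      fun g => by have h := (iwa_mem R g.2).1; rwa [e1] at h
    have mem11 : ∀ g : ↥(iwahoriSubgroup R (m + m)),
        ((g : GL (Fin 2) R) : Matrix (Fin 2) (Fin 2) R) 1 1 - 1 ∈ maximalIdeal R ^ m :=
      fun g => by have h := (iwa_mem R g.2).2.1; rwa [e1] at h
    have mem01 : ∀ g : ↥(iwahoriSubgroup R (m + m)),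
        ((g : GL (Fin 2) R) : Matrix (Fin 2) (Fin 2) R) 0 1 ∈ maximalIdeal R ^ m :=
      fun g => by have h := (iwa_mem R g.2).2.2.1; rwa [e2] at h
    have mem10 : ∀ g : ↥(iwahoriSubgroup R (m + m)),
        ((g : GL (Fin 2) R) : Matrix (Fin 2) (Fin 2) R) 1 0 ∈ maximalIdeal R ^ (m + 1) :=
      fun g => by have h := (iwa_mem R g.2).2.2.2; rwa [e2] at h
    set f : ↥(iwahoriSubgroup R (m + m)) → QQ R m × QQ R m := fun g =>
      (mkQQ R m _ (mem00 g), mkQQ R m _ (mem11 g)) with hfdef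
    have hf : ∀ a b, f (a * b) = f a + f b := by
      intro a b
      have hco : ((a * b : ↥(iwahoriSubgroup R (m + m))) : GL (Fin 2) R) =
          (a : GL (Fin 2) R) * (b : GL (Fin 2) R) := rfl
      refine Prod.ext ?_ ?_
      · apply mkQQ_add_eq
        have key : ((((a * b : ↥(iwahoriSubgroup R (m + m))) : GL (Fin 2) R)) :
              Matrix (Fin 2) (Fin 2) R) 0 0 - 1 -
            ((((a : GL (Fin 2) R) : Matrix (Fin 2) (Fin 2) R) 0 0 - 1) +
             (((b : GL (Fin 2) R) : Matrix (Fin 2) (Fin 2) R) 0 0 - 1)) =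
            (((a : GL (Fin 2) R) : Matrix (Fin 2) (Fin 2) R) 0 0 - 1) *
              (((b : GL (Fin 2) R) : Matrix (Fin 2) (Fin 2) R) 0 0 - 1) +
            ((a : GL (Fin 2) R) : Matrix (Fin 2) (Fin 2) R) 0 1 *
              ((b : GL (Fin 2) R) : Matrix (Fin 2) (Fin 2) R) 1 0 := by
          rw [hco, iwa_mul_entry]; ring
        rw [key]
        refine add_mem ?_ (Ideal.mul_mem_left _ _ (mem10 b))
        rw [pow_succ]
        exact Ideal.mul_mem_mul (mem00 a) (pow_le_max R hm1 (mem00 b))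
      · apply mkQQ_add_eq
        have key : ((((a * b : ↥(iwahoriSubgroup R (m + m))) : GL (Fin 2) R)) :
              Matrix (Fin 2) (Fin 2) R) 1 1 - 1 -
            ((((a : GL (Fin 2) R) : Matrix (Fin 2) (Fin 2) R) 1 1 - 1) +
             (((b : GL (Fin 2) R) : Matrix (Fin 2) (Fin 2) R) 1 1 - 1)) =
            (((a : GL (Fin 2) R) : Matrix (Fin 2) (Fin 2) R) 1 1 - 1) *
              (((b : GL (Fin 2) R) : Matrix (Fin 2) (Fin 2) R) 1 1 - 1) +
            ((a : GL (Fin 2) R) : Matrix (Fin 2) (Fin 2) R) 1 0 *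
              ((b : GL (Fin 2) R) : Matrix (Fin 2) (Fin 2) R) 0 1 := by
          rw [hco, iwa_mul_entry]; ring
        rw [key]
        refine add_mem ?_ (Ideal.mul_mem_right _ _ (mem10 a))
        rw [pow_succ]
        exact Ideal.mul_mem_mul (mem11 a) (pow_le_max R hm1 (mem11 b))
    refine ⟨m, m, MonoidHom.mk' (fun g => Multiplicative.ofAdd (f g))
      (fun a b => by
        show Multiplicative.ofAdd (f (a * b)) = Multiplicative.ofAdd (f a) * Multiplicative.ofAdd (f b)
        rw [hf]; rfl), ?_, ?_⟩
    · ext g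
      simp only [MonoidHom.mem_ker, Subgroup.mem_subgroupOf, MonoidHom.mk'_apply]
      rw [show (1 : Multiplicative (QQ R m × QQ R m)) = Multiplicative.ofAdd 0 from rfl,
        Multiplicative.ofAdd.injective.eq_iff, hfdef, Prod.mk_eq_zero, mkQQ_eq_zero, mkQQ_eq_zero]
      constructor
      · rintro ⟨h1, h2⟩
        refine ⟨?_, ?_, ?_, ?_⟩
        · rw [show (m + m + 1 + 1) / 2 = m + 1 by omega]; exact h1
        · rw [show (m + m + 1 + 1) / 2 = m + 1 by omega]; exact h2
        · rw [show (m + m + 1) / 2 = m by omega]; exact mem01 g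
        · rw [show (m + m + 1) / 2 + 1 = m + 1 by omega]; exact mem10 g
      · rintro ⟨h1, h2, -, -⟩
        rw [show (m + m + 1 + 1) / 2 = m + 1 by omega] at h1 h2
        exact ⟨h1, h2⟩
    · intro y
      obtain ⟨⟨x, hx⟩, h1⟩ := Submodule.Quotient.mk_surjective _ y.toAdd.1
      obtain ⟨⟨z, hz⟩, h2⟩ := Submodule.Quotient.mk_surjective _ y.toAdd.2
      have hux : IsUnit (1 + x) := by
        have := isUnit_one_sub_self_of_mem_nonunits (-x) (neg_mem (pow_le_max R hm1 hx))
        rwa [sub_neg_eq_add] at this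
      have huz : IsUnit (1 + z) := by
        have := isUnit_one_sub_self_of_mem_nonunits (-z) (neg_mem (pow_le_max R hm1 hz))
        rwa [sub_neg_eq_add] at this
      have hu : IsUnit (!![1 + x, 0; 0, 1 + z] : Matrix (Fin 2) (Fin 2) R).det := by
        rw [Matrix.det_fin_two_of]
        simpa using hux.mul huz
      set U : GL (Fin 2) R := Matrix.nonsingInvUnit _ hu with hUdef
      have hUval : (U : Matrix (Fin 2) (Fin 2) R) = !![1 + x, 0; 0, 1 + z] := rfl
      have hUmem : U ∈ iwahoriSubgroup R (m + m) := by
        refine ⟨?_, ?_, ?_, ?_⟩ <;> rw [hUval]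
        · rw [e1]; simpa using hx
        · rw [e1]; simpa using hz
        · simp
        · simp
      refine ⟨⟨U, hUmem⟩, ?_⟩
      apply Multiplicative.toAdd.injective
      show f ⟨U, hUmem⟩ = y.toAdd
      rw [hfdef]
      refine Prod.ext ?_ ?_
      · show Submodule.Quotient.mk _ = _
        rw [← h1]
        exact congrArg Submodule.Quotient.mk (Subtype.ext
          (by show (U : Matrix (Fin 2) (Fin 2) R) 0 0 - 1 = x; rw [hUval]; simp))
      · show Submodule.Quotient.mk _ = _
        rw [← h2]
        exact congrArg Submodule.Quotient.mk (Subtype.ext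
          (by show (U : Matrix (Fin 2) (Fin 2) R) 1 1 - 1 = z; rw [hUval]; simp))
  · -- odd case : j = 2 * m + 1
    subst hm
    have e1 : (2 * m + 1 + 1) / 2 = m + 1 := by omega
    have e2 : (2 * m + 1) / 2 = m := by omega
    have mem00 : ∀ g : ↥(iwahoriSubgroup R (2 * m + 1)),
        ((g : GL (Fin 2) R) : Matrix (Fin 2) (Fin 2) R) 0 0 - 1 ∈ maximalIdeal R ^ (m + 1) :=
      fun g => by have h := (iwa_mem R g.2).1; rwa [e1] at h
    have mem11 : ∀ g : ↥(iwahoriSubgroup R (2 * m + 1)),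
        ((g : GL (Fin 2) R) : Matrix (Fin 2) (Fin 2) R) 1 1 - 1 ∈ maximalIdeal R ^ (m + 1) :=
      fun g => by have h := (iwa_mem R g.2).2.1; rwa [e1] at h
    have mem01 : ∀ g : ↥(iwahoriSubgroup R (2 * m + 1)),
        ((g : GL (Fin 2) R) : Matrix (Fin 2) (Fin 2) R) 0 1 ∈ maximalIdeal R ^ m :=
      fun g => by have h := (iwa_mem R g.2).2.2.1; rwa [e2] at h
    have mem10 : ∀ g : ↥(iwahoriSubgroup R (2 * m + 1)),
        ((g : GL (Fin 2) R) : Matrix (Fin 2) (Fin 2) R) 1 0 ∈ maximalIdeal R ^ (m + 1) :=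
      fun g => by have h := (iwa_mem R g.2).2.2.2; rwa [e2] at h
    set f : ↥(iwahoriSubgroup R (2 * m + 1)) → QQ R m × QQ R (m + 1) := fun g =>
      (mkQQ R m _ (mem01 g), mkQQ R (m + 1) _ (mem10 g)) with hfdef
    have hf : ∀ a b, f (a * b) = f a + f b := by
      intro a b
      have hco : ((a * b : ↥(iwahoriSubgroup R (2 * m + 1))) : GL (Fin 2) R) =
          (a : GL (Fin 2) R) * (b : GL (Fin 2) R) := rfl
      refine Prod.ext ?_ ?_
      · apply mkQQ_add_eq
        have key : ((((a * b : ↥(iwahoriSubgroup R (2 * m + 1))) : GL (Fin 2) R)) :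
              Matrix (Fin 2) (Fin 2) R) 0 1 -
            (((a : GL (Fin 2) R) : Matrix (Fin 2) (Fin 2) R) 0 1 +
             ((b : GL (Fin 2) R) : Matrix (Fin 2) (Fin 2) R) 0 1) =
            (((a : GL (Fin 2) R) : Matrix (Fin 2) (Fin 2) R) 0 0 - 1) *
              ((b : GL (Fin 2) R) : Matrix (Fin 2) (Fin 2) R) 0 1 +
            ((a : GL (Fin 2) R) : Matrix (Fin 2) (Fin 2) R) 0 1 *
              (((b : GL (Fin 2) R) : Matrix (Fin 2) (Fin 2) R) 1 1 - 1) := by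
          rw [hco, iwa_mul_entry]; ring
        rw [key]
        exact add_mem (Ideal.mul_mem_right _ _ (mem00 a))
          (Ideal.mul_mem_left _ _ (mem11 b))
      · apply mkQQ_add_eq
        have key : ((((a * b : ↥(iwahoriSubgroup R (2 * m + 1))) : GL (Fin 2) R)) :
              Matrix (Fin 2) (Fin 2) R) 1 0 -
            (((a : GL (Fin 2) R) : Matrix (Fin 2) (Fin 2) R) 1 0 +
             ((b : GL (Fin 2) R) : Matrix (Fin 2) (Fin 2) R) 1 0) =
            ((a : GL (Fin 2) R) : Matrix (Fin 2) (Fin 2) R) 1 0 *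
              (((b : GL (Fin 2) R) : Matrix (Fin 2) (Fin 2) R) 0 0 - 1) +
            ((b : GL (Fin 2) R) : Matrix (Fin 2) (Fin 2) R) 1 0 *
              (((a : GL (Fin 2) R) : Matrix (Fin 2) (Fin 2) R) 1 1 - 1) := by
          rw [hco, iwa_mul_entry]; ring
        rw [key, pow_succ]
        exact add_mem (Ideal.mul_mem_mul (mem10 a) (pow_le_max R (by omega) (mem00 b)))
          (Ideal.mul_mem_mul (mem10 b) (pow_le_max R (by omega) (mem11 a)))
    refine ⟨m, m + 1, MonoidHom.mk' (fun g => Multiplicative.ofAdd (f g))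
      (fun a b => by
        show Multiplicative.ofAdd (f (a * b)) = Multiplicative.ofAdd (f a) * Multiplicative.ofAdd (f b)
        rw [hf]; rfl), ?_, ?_⟩
    · ext g
      simp only [MonoidHom.mem_ker, Subgroup.mem_subgroupOf, MonoidHom.mk'_apply]
      rw [show (1 : Multiplicative (QQ R m × QQ R (m + 1))) = Multiplicative.ofAdd 0 from rfl,
        Multiplicative.ofAdd.injective.eq_iff, hfdef, Prod.mk_eq_zero, mkQQ_eq_zero, mkQQ_eq_zero]
      constructor
      · rintro ⟨h1, h2⟩
        refine ⟨?_, ?_, ?_, ?_⟩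
        · rw [show (2 * m + 1 + 1 + 1) / 2 = m + 1 by omega]; exact mem00 g
        · rw [show (2 * m + 1 + 1 + 1) / 2 = m + 1 by omega]; exact mem11 g
        · rw [show (2 * m + 1 + 1) / 2 = m + 1 by omega]; exact h1
        · rw [show (2 * m + 1 + 1) / 2 + 1 = m + 2 by omega]; exact h2
      · rintro ⟨-, -, h3, h4⟩
        rw [show (2 * m + 1 + 1) / 2 = m + 1 by omega] at h3
        rw [show (2 * m + 1 + 1) / 2 + 1 = m + 2 by omega] at h4
        exact ⟨h3, h4⟩
    · intro y
      obtain ⟨⟨x, hx⟩, h1⟩ := Submodule.Quotient.mk_surjective _ y.toAdd.1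
      obtain ⟨⟨z, hz⟩, h2⟩ := Submodule.Quotient.mk_surjective _ y.toAdd.2
      have hzm : z ∈ maximalIdeal R := pow_le_max R (by omega) hz
      have hdet : (!![1, x; z, 1] : Matrix (Fin 2) (Fin 2) R).det = 1 - x * z := by
        rw [Matrix.det_fin_two_of]; ring
      have hu : IsUnit (!![1, x; z, 1] : Matrix (Fin 2) (Fin 2) R).det := by
        rw [hdet]
        exact isUnit_one_sub_self_of_mem_nonunits _ (Ideal.mul_mem_left _ _ hzm)
      set U : GL (Fin 2) R := Matrix.nonsingInvUnit _ hu with hUdef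
      have hUval : (U : Matrix (Fin 2) (Fin 2) R) = !![1, x; z, 1] := rfl
      have hUmem : U ∈ iwahoriSubgroup R (2 * m + 1) := by
        refine ⟨?_, ?_, ?_, ?_⟩ <;> rw [hUval]
        · simp
        · simp
        · rw [e2]; simpa using hx
        · rw [e2]; simpa using hz
      refine ⟨⟨U, hUmem⟩, ?_⟩
      apply Multiplicative.toAdd.injective
      show f ⟨U, hUmem⟩ = y.toAdd
      rw [hfdef]
      refine Prod.ext ?_ ?_
      · show Submodule.Quotient.mk _ = _
        rw [← h1]
        exact congrArg Submodule.Quotient.mk (Subtype.ext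
          (by show (U : Matrix (Fin 2) (Fin 2) R) 0 1 = x; rw [hUval]; simp))
      · show Submodule.Quotient.mk _ = _
        rw [← h2]
        exact congrArg Submodule.Quotient.mk (Subtype.ext
          (by show (U : Matrix (Fin 2) (Fin 2) R) 1 0 = z; rw [hUval]; simp))

lemma iwa_antitone {j k : ℕ} (h : j ≤ k) : iwahoriSubgroup R k ≤ iwahoriSubgroup R j := by
  intro g hg
  obtain ⟨h1, h2, h3, h4⟩ := iwa_mem R hg
  exact ⟨Ideal.pow_le_pow_right (by omega) h1, Ideal.pow_le_pow_right (by omega) h2,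
    Ideal.pow_le_pow_right (by omega) h3, Ideal.pow_le_pow_right (by omega) h4⟩

end Aux

/-- Let `R` be a discrete valuation ring with finite residue field of cardinality `q`.
For every `i ≥ 1`, the set `Vⁱ = 1 + (rad 𝒥)ⁱ` is a subgroup of `V¹` of index
`q ^ (2 * (i - 1))`. -/
theorem index_iwahoriFiltration (R : Type*) [CommRing R] [IsDomain R]
    [IsDiscreteValuationRing R] [Finite (ResidueField R)]
    (q : ℕ) (hq : Nat.card (ResidueField R) = q) (i : ℕ) (hi : 1 ≤ i) :
    ∃ V1 Vi : Subgroup (GL (Fin 2) R),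
      (V1 : Set (GL (Fin 2) R)) = iwahoriFiltration R 1 ∧
      (Vi : Set (GL (Fin 2) R)) = iwahoriFiltration R i ∧
      Vi ≤ V1 ∧ (Vi.subgroupOf V1).index = q ^ (2 * (i - 1)) := by
  have main : ∀ n : ℕ, 1 ≤ n → (iwahoriSubgroup R n).relIndex (iwahoriSubgroup R 1) =
      Nat.card (ResidueField R) ^ (2 * (n - 1)) := by
    intro n
    induction n with
    | zero => intro h; omega
    | succ k ih =>
      intro _
      rcases Nat.eq_zero_or_pos k with rfl | hk
      · simp [Subgroup.relIndex_self]
      · rw [← Subgroup.relIndex_mul_relIndex (iwahoriSubgroup R (k + 1)) (iwahoriSubgroup R k)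
          (iwahoriSubgroup R 1) (iwa_antitone R (by omega)) (iwa_antitone R hk),
          relindex_step R k hk, ih hk, ← pow_add]
        congr 1
        omega
  refine ⟨iwahoriSubgroup R 1, iwahoriSubgroup R i, rfl, rfl, iwa_antitone R hi, ?_⟩
  rw [← hq, ← Subgroup.relIndex]
  exact main i hi
end

section
/- Let α be a type, let G = FreeGroup α be the free group on α, and let A be any representation of G on an abelian group (an object of Rep ℤ G). Then the second group cohomology H²(G, A) is zero. -/
open CategoryTheory

namespace FreeGroupH2Aux

open groupCohomology

variable {G : Type} [Group G] {A : Rep ℤ G}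

/-- The extension group structure on `A × G` twisted by a 2-cocycle `f`. -/
noncomputable def extGroup (f : cocycles₂ A) : Group (A × G) where
  mul p q := (p.1 + A.ρ p.2 q.1 + f (p.2, q.2), p.2 * q.2)
  one := (-f (1, 1), 1)
  inv p := (-f (1, 1) - f (p.2⁻¹, p.2) - A.ρ p.2⁻¹ p.1, p.2⁻¹)
  mul_assoc p q r := by
    have hc := (mem_cocycles₂_iff (f : (G × G) → A)).1 f.2 p.2 q.2 r.2
    refine Prod.ext ?_ (mul_assoc _ _ _)
    show p.1 + A.ρ p.2 q.1 + f (p.2, q.2) + A.ρ (p.2 * q.2) r.1 + f (p.2 * q.2, r.2)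
      = p.1 + A.ρ p.2 (q.1 + A.ρ q.2 r.1 + f (q.2, r.2)) + f (p.2, q.2 * r.2)
    have hmm : A.ρ (p.2 * q.2) r.1 = A.ρ p.2 (A.ρ q.2 r.1) := by rw [map_mul]; rfl
    rw [eq_sub_of_add_eq hc, hmm, map_add, map_add]
    abel
  one_mul p := by
    refine Prod.ext ?_ (one_mul _)
    show -f (1, 1) + A.ρ 1 p.1 + f (1, p.2) = p.1
    have h1 : A.ρ (1 : G) p.1 = p.1 := by rw [map_one]; rfl
    rw [cocycles₂_map_one_fst f p.2, h1]
    abel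
  mul_one p := by
    refine Prod.ext ?_ (mul_one _)
    show p.1 + A.ρ p.2 (-f (1, 1)) + f (p.2, 1) = p.1
    rw [cocycles₂_map_one_snd f p.2, map_neg]
    abel
  inv_mul_cancel p := by
    refine Prod.ext ?_ (inv_mul_cancel _)
    show -f (1, 1) - f (p.2⁻¹, p.2) - A.ρ p.2⁻¹ p.1 + A.ρ p.2⁻¹ p.1 + f (p.2⁻¹, p.2)
      = -f (1, 1)
    abel

theorem key (α : Type) (A : Rep ℤ (FreeGroup α)) (f : cocycles₂ A) :
    ∃ x : FreeGroup α → A, ∀ g h, A.ρ g (x h) - x (g * h) + x g = f (g, h) := by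
  letI : Group (A × FreeGroup α) := extGroup f
  have mul_def : ∀ p q : A × FreeGroup α,
      p * q = (p.1 + A.ρ p.2 q.1 + f (p.2, q.2), p.2 * q.2) := fun _ _ => rfl
  let φ : FreeGroup α →* A × FreeGroup α := FreeGroup.lift fun x => ((0 : A), FreeGroup.of x)
  let π : (A × FreeGroup α) →* FreeGroup α :=
    { toFun := Prod.snd, map_one' := rfl, map_mul' := fun _ _ => rfl }
  have hπφ : π.comp φ = MonoidHom.id _ :=
    FreeGroup.ext_hom _ _ fun a => by simp [φ, π]; rfl
  have hsnd : ∀ w, (φ w).2 = w := fun w => DFunLike.congr_fun hπφ w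
  refine ⟨fun w => -(φ w).1, fun g h => ?_⟩
  have hm := congrArg Prod.fst (map_mul φ g h)
  rw [mul_def] at hm
  simp only [hsnd] at hm
  show A.ρ g (-(φ h).1) - -(φ (g * h)).1 + -(φ g).1 = f (g, h)
  rw [hm, map_neg]
  abel

end FreeGroupH2Aux

/-- The second group cohomology of a free group vanishes with arbitrary coefficients:
for any representation `A` of `FreeGroup α` on an abelian group, `H²(FreeGroup α, A) = 0`. -/
theorem groupCohomology_two_freeGroup_isZero (α : Type) (A : Rep ℤ (FreeGroup α)) :
    Limits.IsZero (groupCohomology A 2) := by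
  have htop : ∀ f : groupCohomology.cocycles₂ A, ⇑f ∈ groupCohomology.coboundaries₂ A := by
    intro f
    obtain ⟨x, hx⟩ := FreeGroupH2Aux.key α A f
    exact ⟨x, funext fun p => by simpa [groupCohomology.d₁₂_hom_apply] using hx p.1 p.2⟩
  have hz : ∀ y : groupCohomology.H2 A, y = 0 := fun y =>
    groupCohomology.H2_induction_on y fun f => (groupCohomology.H2π_eq_zero_iff f).2 (htop f)
  haveI : Subsingleton (groupCohomology.H2 A) := ⟨fun a b => (hz a).trans (hz b).symm⟩
  exact ModuleCat.isZero_of_subsingleton _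
end

section
/- Let α be a type with at least two elements and let G = FreeGroup α be the free group on α. Then every nontrivial conjugacy class of G is infinite: for every g ∈ G with g ≠ 1, the set {x ∈ G : x is conjugate to g} is infinite. -/
open List

private def FGRel {α : Type*} (a b : α × Bool) : Prop := ¬(a.1 = b.1 ∧ a.2 = !b.2)

private theorem reduce_eq_self_of_chain' {α : Type*} [DecidableEq α]
    {L : List (α × Bool)} (h : List.Chain' FGRel L) : FreeGroup.reduce L = L := by
  induction L with
  | nil => rfl
  | cons a L ih =>
    rw [List.Chain', List.isChain_cons] at h
    rw [FreeGroup.reduce.cons, ih h.2]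
    cases L with
    | nil => rfl
    | cons b L =>
      have : ¬(a.1 = b.1 ∧ a.2 = !b.2) := h.1 b rfl
      simp [this]

private theorem chain'_of_reduce_eq_self {α : Type*} [DecidableEq α]
    {L : List (α × Bool)} (h : FreeGroup.reduce L = L) : List.Chain' FGRel L := by
  rw [List.Chain', List.isChain_iff_getElem]
  intro i hi
  by_contra hbad
  unfold FGRel at hbad
  push_neg at hbad
  obtain ⟨h1, h2⟩ := hbad
  -- decompose L
  have hi1 : i < L.length := by omega
  have hi2 : i + 1 < L.length := by omega
  have hdecomp : L = L.take i ++ L.get ⟨i, hi1⟩ :: L.get ⟨i + 1, hi2⟩ :: L.drop (i + 2) := by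
    conv_lhs => rw [← List.take_append_drop i L]
    congr 1
    rw [List.drop_eq_getElem_cons hi1]
    congr 1
    rw [List.drop_eq_getElem_cons hi2]
    simp
  set a := L.get ⟨i, hi1⟩
  set b := L.get ⟨i + 1, hi2⟩
  have hb : b = (a.1, !a.2) := by
    refine Prod.ext h1.symm ?_
    show L[i+1].2 = !L[i].2
    rw [h2]; simp
  rw [hb] at hdecomp
  exact FreeGroup.reduce.not (L₂ := L.take i) (L₃ := L.drop (i + 2))
    (x := a.1) (b := a.2) (h.trans hdecomp)

private theorem chain'_replicate_self {α : Type*} {x : α × Bool} (n : ℕ) :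
    List.Chain' FGRel (List.replicate n x) := by
  induction n with
  | zero => simp [List.Chain']
  | succ n ih =>
    rw [List.Chain', List.replicate_succ, List.isChain_cons]
    refine ⟨fun y hy => ?_, ih⟩
    have : y = x := by
      cases n with
      | zero => simp at hy
      | succ n => rw [List.replicate_succ] at hy; simp at hy; exact hy.symm
    subst this
    intro ⟨_, h2⟩
    simp at h2

/-- Let `α` have at least two elements.  Then every nontrivial conjugacy class of the free
group on `α` is infinite: for `g ≠ 1`, the set of elements conjugate to `g` is infinite. -/
theorem freeGroup_conjugacyClass_infinite (α : Type*) [Nontrivial α]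
    (g : FreeGroup α) (hg : g ≠ 1) :
    {x : FreeGroup α | IsConj g x}.Infinite := by
  classical
  set w := g.toWord with hwdef
  have hw : w ≠ [] := fun h => hg (FreeGroup.toWord_eq_nil_iff.mp h)
  have hwred : FreeGroup.reduce w = w := FreeGroup.reduce_toWord g
  set f := w.head hw
  set l := w.getLast hw
  -- choose a letter x with x ≠ (f.1, !f.2) and x ≠ l
  obtain ⟨x, hx1, hx2⟩ : ∃ x : α × Bool, x ≠ (f.1, !f.2) ∧ x ≠ l := by
    by_cases hfl : f.1 = l.1
    · obtain ⟨c, hc⟩ := exists_ne f.1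
      exact ⟨(c, true), fun h => hc (congrArg Prod.fst h),
        fun h => hc ((congrArg Prod.fst h).trans hfl.symm)⟩
    · exact ⟨f, fun h => by simp [Prod.ext_iff] at h, fun h => hfl (congrArg Prod.fst h)⟩
  set x' : α × Bool := (x.1, !x.2) with hx'
  -- the conjugating words
  set Ln : ℕ → List (α × Bool) :=
    fun n => List.replicate n x ++ w ++ List.replicate n x' with hLn
  have hchain : ∀ n, List.Chain' FGRel (Ln n) := by
    intro n
    show List.Chain' FGRel (List.replicate n x ++ w ++ List.replicate n x')
    rw [List.Chain', List.append_assoc, List.isChain_append]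
    refine ⟨chain'_replicate_self n, ?_, ?_⟩
    · rw [List.isChain_append]
      refine ⟨chain'_of_reduce_eq_self hwred, chain'_replicate_self n, ?_⟩
      intro p hp q hq
      have hp' : p = l := by
        rwa [List.getLast?_eq_getLast hw, Option.mem_some_iff, eq_comm] at hp
      have hq' : q = x' := by
        cases n with
        | zero => simp at hq
        | succ n =>
          rw [List.replicate_succ] at hq
          simp at hq; exact hq.symm
      subst hp' hq'
      intro ⟨h1, h2⟩
      apply hx2
      ext
      · exact h1.symm
      · rw [hx'] at h2; simp at h2; exact h2.symm
    · intro p hp q hq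
      have hp' : p = x := by
        cases n with
        | zero => simp at hp
        | succ n =>
          rw [List.getLast?_eq_getLast (by simp), Option.mem_some_iff, eq_comm] at hp
          simpa using hp
      have hq' : q = f := by
        rw [List.head?_append_of_ne_nil _ hw] at hq
        rwa [List.head?_eq_head hw, Option.mem_some_iff, eq_comm] at hq
      subst hp' hq'
      intro ⟨h1, h2⟩
      exact hx1 (Prod.ext h1 h2)
  have hred : ∀ n, FreeGroup.reduce (Ln n) = Ln n :=
    fun n => reduce_eq_self_of_chain' (hchain n)
  -- each mk (Ln n) is conjugate to g
  have hmem : ∀ n, FreeGroup.mk (Ln n) ∈ {x : FreeGroup α | IsConj g x} := by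
    intro n
    have hinv : FreeGroup.invRev (List.replicate n x) = List.replicate n x' := by
      unfold FreeGroup.invRev
      simp [hx', List.map_replicate]
    have h1 : FreeGroup.mk (Ln n) =
        FreeGroup.mk (List.replicate n x) * g * (FreeGroup.mk (List.replicate n x))⁻¹ := by
      rw [FreeGroup.inv_mk, hinv, ← FreeGroup.mk_toWord (x := g), ← hwdef,
        FreeGroup.mul_mk, FreeGroup.mul_mk]
    rw [Set.mem_setOf_eq, isConj_iff]
    exact ⟨FreeGroup.mk (List.replicate n x), h1.symm⟩
  -- norms are distinct
  have hnorm : ∀ n, FreeGroup.norm (FreeGroup.mk (Ln n)) = 2 * n + w.length := by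
    intro n
    unfold FreeGroup.norm
    rw [FreeGroup.toWord_mk, hred]
    show (List.replicate n x ++ w ++ List.replicate n x').length = _
    simp
    omega
  apply Set.infinite_of_injective_forall_mem (f := fun n : ℕ => FreeGroup.mk (Ln n)) ?_ hmem
  intro m n hmn
  dsimp only at hmn
  have h := hnorm m
  rw [hmn, hnorm n] at h
  omega
end
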